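/- Let φ_t(z,w) = (e^{iat}z, e^{ibt}w) be the flow on S³ × S³ of the vector field aH₁ + bH₂ (H_i the Hopf field on the i-th factor). Then ⟨z(t), w(t)⟩ = e^{i(a-b)t}⟨z,w⟩ along flow lines; consequently, if a ≠ b, every flow line starting at a point with ⟨z,w⟩ ≠ 0 crosses the set {⟨z,w⟩ ∈ (0,∞)} exactly once in each time interval of length 2π/|a-b|, and the asymptotic linking number of the flow line with N = {⟨z,w⟩ = 0} equals (a-b)/(2π). -/

import Mathlib

open Complex Filter

noncomputable def hermPairing (p : (ℂ × ℂ) × (ℂ × ℂ)) : ℂ :=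
  p.1.1 * (starRingEnd ℂ) p.2.1 + p.1.2 * (starRingEnd ℂ) p.2.2

def sphere3 : Set (ℂ × ℂ) := {z | Complex.normSq z.1 + Complex.normSq z.2 = 1}

/-- The flow of aH₁ + bH₂ on S³ × S³: (z,w) ↦ (e^{iat}z, e^{ibt}w). -/
noncomputable def hopfFlow (a b t : ℝ) (p : (ℂ × ℂ) × (ℂ × ℂ)) :
    (ℂ × ℂ) × (ℂ × ℂ) :=
  ((Complex.exp (Complex.I * (a * t : ℝ)) * p.1.1,
    Complex.exp (Complex.I * (a * t : ℝ)) * p.1.2),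
   (Complex.exp (Complex.I * (b * t : ℝ)) * p.2.1,
    Complex.exp (Complex.I * (b * t : ℝ)) * p.2.2))

/-- The crossing condition: ⟨z,w⟩ lies on the positive real ray (0,∞). -/
def onPositiveRay (p : (ℂ × ℂ) × (ℂ × ℂ)) : Prop :=
  ∃ c : ℝ, 0 < c ∧ hermPairing p = (c : ℂ)

/-- Part 1: the pairing is rotated by `e^{i(a-b)t}` along the flow. -/
lemma flow_pairing (a b t : ℝ) (p : (ℂ × ℂ) × (ℂ × ℂ)) :
    hermPairing (hopfFlow a b t p) =
      Complex.exp (Complex.I * ((a - b) * t : ℝ)) * hermPairing p := by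
  have h1 : (starRingEnd ℂ) (Complex.exp (Complex.I * (b * t : ℝ))) =
      Complex.exp (-(Complex.I * (b * t : ℝ))) := by
    rw [← Complex.exp_conj, map_mul, Complex.conj_I, Complex.conj_ofReal, neg_mul]
  have h2 : Complex.exp (Complex.I * (a * t : ℝ)) *
      Complex.exp (-(Complex.I * (b * t : ℝ))) =
      Complex.exp (Complex.I * ((a - b) * t : ℝ)) := by
    rw [← Complex.exp_add]
    congr 1
    push_cast
    ring
  simp only [hermPairing, hopfFlow, map_mul, h1]
  rw [← h2]
  ring

/-- The crossing condition in terms of the argument of the pairing. -/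
lemma cross_iff_real (a b : ℝ) (p : (ℂ × ℂ) × (ℂ × ℂ)) (hc : hermPairing p ≠ 0) (s : ℝ) :
    onPositiveRay (hopfFlow a b s p) ↔
      ∃ n : ℤ, (a - b) * s + (hermPairing p).arg = 2 * Real.pi * n := by
  set c := hermPairing p with hcdef
  have habs : (0 : ℝ) < ‖c‖ := norm_pos_iff.mpr hc
  have habs' : ((‖c‖ : ℝ) : ℂ) ≠ 0 := by exact_mod_cast habs.ne'
  have hcform : (‖c‖ : ℂ) * Complex.exp (c.arg * Complex.I) = c :=
    Complex.norm_mul_exp_arg_mul_I c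
  constructor
  · rintro ⟨r, hr, hre⟩
    rw [flow_pairing, ← hcdef] at hre
    have hab1 : ‖(Complex.exp (Complex.I * (((a - b) * s : ℝ) : ℂ)))‖ = 1 := by
      simp [Complex.norm_exp, Complex.mul_re]
    have hrabs : r = ‖c‖ := by
      have := congrArg norm hre
      rw [norm_mul, hab1, one_mul] at this
      simp only [Complex.norm_real, Real.norm_eq_abs, abs_of_pos hr] at this
      linarith [this]
    have h2 : Complex.exp (Complex.I * (((a - b) * s : ℝ) : ℂ)) *
        ((‖c‖ : ℂ) * Complex.exp (c.arg * Complex.I)) = (‖c‖ : ℂ) := by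
      rw [hcform]; rw [hrabs] at hre; exact hre
    have h3 : ((‖c‖ : ℝ) : ℂ) *
        (Complex.exp (Complex.I * (((a - b) * s : ℝ) : ℂ)) * Complex.exp (c.arg * Complex.I)) =
        ((‖c‖ : ℝ) : ℂ) * 1 := by rw [mul_one]; linear_combination h2
    have h1 := mul_left_cancel₀ habs' h3
    rw [← Complex.exp_add, Complex.exp_eq_one_iff] at h1
    obtain ⟨n, hn⟩ := h1
    refine ⟨n, ?_⟩
    have := congrArg Complex.im hn
    simp [Complex.mul_im, Complex.mul_re] at this
    linarith [this]
  · rintro ⟨n, hn⟩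
    refine ⟨‖c‖, habs, ?_⟩
    rw [flow_pairing, ← hcdef]
    conv_lhs => rw [← hcform]
    rw [show Complex.exp (Complex.I * (((a - b) * s : ℝ) : ℂ)) *
        ((‖c‖ : ℂ) * Complex.exp (c.arg * Complex.I)) =
        (‖c‖ : ℂ) *
          Complex.exp (Complex.I * (((a - b) * s : ℝ) : ℂ) + c.arg * Complex.I) by
      rw [Complex.exp_add]; ring]
    have harg : Complex.I * (((a - b) * s : ℝ) : ℂ) + c.arg * Complex.I =
        (n : ℂ) * (2 * Real.pi * Complex.I) := by
      have h : ((a - b) * s : ℝ) = 2 * Real.pi * n - c.arg := by linarith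
      rw [h]; push_cast; ring
    rw [harg, show ((n : ℂ) * (2 * Real.pi * Complex.I)) =
        ((n : ℤ) : ℂ) * (2 * Real.pi * Complex.I) by norm_num,
      Complex.exp_int_mul_two_pi_mul_I, mul_one]

/-- The crossing times form an arithmetic progression of step `2π/|a-b|`. -/
lemma cross_iff_prog (a b : ℝ) (p : (ℂ × ℂ) × (ℂ × ℂ)) (hab : a ≠ b)
    (hc : hermPairing p ≠ 0) (s : ℝ) :
    onPositiveRay (hopfFlow a b s p) ↔
      ∃ k : ℤ, s = -(hermPairing p).arg / (a - b) + k * (2 * Real.pi / |a - b|) := by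
  rw [cross_iff_real a b p hc s]
  set θ := (hermPairing p).arg
  have hω : a - b ≠ 0 := sub_ne_zero.mpr hab
  constructor
  · rintro ⟨n, hn⟩
    rcases hω.lt_or_gt with h | h
    · refine ⟨-n, ?_⟩
      rw [abs_of_neg (by linarith : a - b < 0), eq_comm]
      have hba : -a + b ≠ 0 := fun h0 => hω (by linarith)
      have e : -θ / (a - b) + (↑(-n) : ℝ) * (2 * Real.pi / -(a - b)) =
          (2 * Real.pi * n - θ) / (a - b) := by
        push_cast; field_simp
        ring
      rw [e, div_eq_iff hω]
      linarith
    · refine ⟨n, ?_⟩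
      rw [abs_of_pos (by linarith : 0 < a - b), eq_comm]
      have e : -θ / (a - b) + (n : ℝ) * (2 * Real.pi / (a - b)) =
          (2 * Real.pi * n - θ) / (a - b) := by field_simp; ring
      rw [e, div_eq_iff hω]
      linarith
  · rintro ⟨k, rfl⟩
    rcases hω.lt_or_gt with h | h
    · refine ⟨-k, ?_⟩
      have hba : -a + b ≠ 0 := fun h0 => hω (by linarith)
      rw [abs_of_neg (by linarith : a - b < 0)]
      push_cast
      field_simp
      ring
    · refine ⟨k, ?_⟩
      rw [abs_of_pos (by linarith : 0 < a - b)]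
      field_simp
      ring

/-- Abstract counting lemma for an arithmetic progression of crossing times. -/
lemma period_count (Cross : ℝ → Prop) (A P : ℝ) (hP : 0 < P)
    (key : ∀ s, Cross s ↔ ∃ k : ℤ, s = A + k * P) :
    (∀ t₀ : ℝ, ∃! t : ℝ, t ∈ Set.Ico t₀ (t₀ + P) ∧ Cross t) ∧
    Tendsto (fun T : ℝ => (Nat.card {s : ℝ // s ∈ Set.Ioc 0 T ∧ Cross s} : ℝ) / T)
      atTop (nhds (1 / P)) := by
  constructor
  · intro t₀
    obtain ⟨m, hm, hmu⟩ := existsUnique_add_zsmul_mem_Ico hP A t₀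
    rw [zsmul_eq_mul] at hm
    refine ⟨A + m * P, ⟨hm, (key _).mpr ⟨m, rfl⟩⟩, ?_⟩
    rintro t ⟨htmem, htc⟩
    obtain ⟨k, rfl⟩ := (key t).mp htc
    have := hmu k (by simpa [zsmul_eq_mul] using htmem)
    rw [this]
  · have hinj : Function.Injective (fun k : ℤ => A + (k : ℝ) * P) := by
      intro k l h
      simp only at h
      have : (k : ℝ) = l := mul_right_cancel₀ hP.ne' (by linarith)
      exact_mod_cast this
    have hcount : ∀ T : ℝ,
        (Nat.card {s : ℝ // s ∈ Set.Ioc 0 T ∧ Cross s}) =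
          (⌊(T - A) / P⌋ - ⌊(-A) / P⌋).toNat := by
      intro T
      have hset : {s : ℝ | s ∈ Set.Ioc 0 T ∧ Cross s} =
          (fun k : ℤ => A + (k : ℝ) * P) '' ↑(Finset.Ioc ⌊(-A) / P⌋ ⌊(T - A) / P⌋) := by
        ext s
        simp only [Set.mem_setOf_eq, Set.mem_image, Finset.coe_Ioc, Set.mem_Ioc, key,
          Finset.mem_coe, Finset.mem_Ioc]
        constructor
        · rintro ⟨⟨hs0, hsT⟩, k, rfl⟩
          refine ⟨k, ⟨Int.floor_lt.mpr ?_, Int.le_floor.mpr ?_⟩, rfl⟩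
          · rw [div_lt_iff₀ hP]; linarith
          · rw [le_div_iff₀ hP]; linarith
        · rintro ⟨k, ⟨hk1, hk2⟩, rfl⟩
          have h1 : (-A) / P < (k : ℝ) := Int.floor_lt.mp hk1
          have h2 : (k : ℝ) ≤ (T - A) / P := Int.le_floor.mp hk2
          rw [div_lt_iff₀ hP] at h1
          rw [le_div_iff₀ hP] at h2
          exact ⟨⟨by linarith, by linarith⟩, ⟨k, rfl⟩⟩
      rw [show Nat.card {s : ℝ // s ∈ Set.Ioc 0 T ∧ Cross s} =
          ({s : ℝ | s ∈ Set.Ioc 0 T ∧ Cross s}).ncard from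
        Nat.card_coe_set_eq _, hset, Set.ncard_image_of_injective _ hinj,
        Set.ncard_coe_finset, Int.card_Ioc]
    set l : ℤ := ⌊(-A) / P⌋ with hl
    have hNval : ∀ᶠ T in atTop, (Nat.card {s : ℝ // s ∈ Set.Ioc 0 T ∧ Cross s} : ℝ) =
        (⌊(T - A) / P⌋ : ℝ) - (l : ℝ) := by
      filter_upwards [eventually_ge_atTop (0 : ℝ)] with T hT
      have hle : l ≤ ⌊(T - A) / P⌋ := by
        apply Int.le_floor.mpr
        refine le_trans (Int.floor_le _) ?_
        gcongr
        linarith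
      rw [hcount T]
      rw [← Int.cast_natCast, Int.toNat_of_nonneg (sub_nonneg.mpr hle)]
      push_cast
      ring
    have haux : ∀ c : ℝ, Tendsto (fun T : ℝ => (T / P - c) / T) atTop (nhds (1 / P)) := by
      intro c
      have h0 : Tendsto (fun T : ℝ => c / T) atTop (nhds 0) :=
        tendsto_const_nhds.div_atTop tendsto_id
      have h1 : Tendsto (fun T : ℝ => 1 / P - c / T) atTop (nhds (1 / P - 0)) :=
        tendsto_const_nhds.sub h0
      rw [sub_zero] at h1
      refine h1.congr' ?_
      filter_upwards [eventually_gt_atTop (0 : ℝ)] with T hT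
      field_simp
    refine tendsto_of_tendsto_of_tendsto_of_le_of_le'
      (haux (A / P + l + 1)) (haux (A / P + l)) ?_ ?_
    · filter_upwards [hNval, eventually_gt_atTop (0 : ℝ)] with T hN hT
      rw [hN]
      apply (div_le_div_iff_of_pos_right hT).mpr
      have := Int.sub_one_lt_floor ((T - A) / P)
      have hfl : (T - A) / P - 1 ≤ (⌊(T - A) / P⌋ : ℝ) := by linarith
      calc T / P - (A / P + (l : ℝ) + 1) = (T - A) / P - 1 - l := by ring
        _ ≤ (⌊(T - A) / P⌋ : ℝ) - l := by linarith
    · filter_upwards [hNval, eventually_gt_atTop (0 : ℝ)] with T hN hT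
      rw [hN]
      apply (div_le_div_iff_of_pos_right hT).mpr
      have hfl : (⌊(T - A) / P⌋ : ℝ) ≤ (T - A) / P := Int.floor_le _
      calc (⌊(T - A) / P⌋ : ℝ) - (l : ℝ) ≤ (T - A) / P - l := by linarith
        _ = T / P - (A / P + l) := by ring

/- Along the flow of aH₁ + bH₂ one has ⟨z(t),w(t)⟩ = e^{i(a-b)t}⟨z,w⟩.  Hence if
a ≠ b and ⟨z,w⟩ ≠ 0, the flow line through (z,w) ∈ S³ × S³ crosses the set
{⟨z,w⟩ ∈ (0,∞)} exactly once in every time interval of length 2π/|a-b|, and the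
asymptotic linking number of the flow line with N = {⟨z,w⟩ = 0}, i.e. the limit
of the signed number of crossings per unit time (sign +1 if a > b, -1 if a < b),
equals (a-b)/(2π). -/
theorem hopf_flow_linking_with_N
    (a b : ℝ) :
    (∀ (t : ℝ) (p : (ℂ × ℂ) × (ℂ × ℂ)),
        hermPairing (hopfFlow a b t p) =
          Complex.exp (Complex.I * ((a - b) * t : ℝ)) * hermPairing p) ∧
    (∀ p : (ℂ × ℂ) × (ℂ × ℂ), p ∈ sphere3 ×ˢ sphere3 → a ≠ b →
      hermPairing p ≠ 0 →
      (∀ t₀ : ℝ, ∃! t : ℝ,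
          t ∈ Set.Ico t₀ (t₀ + 2 * Real.pi / |a - b|) ∧
          onPositiveRay (hopfFlow a b t p)) ∧
      Tendsto (fun T : ℝ =>
          (if a > b then (1 : ℝ) else -1) *
            (Nat.card {s : ℝ // s ∈ Set.Ioc 0 T ∧ onPositiveRay (hopfFlow a b s p)}) / T)
        atTop (nhds ((a - b) / (2 * Real.pi)))) := by
  refine ⟨fun t p => flow_pairing a b t p, ?_⟩
  intro p _hmem hab hc
  have hω : a - b ≠ 0 := sub_ne_zero.mpr hab
  have hP : 0 < 2 * Real.pi / |a - b| :=
    div_pos (by positivity) (abs_pos.mpr hω)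
  obtain ⟨h1, h2⟩ := period_count (fun s => onPositiveRay (hopfFlow a b s p))
    (-(hermPairing p).arg / (a - b)) (2 * Real.pi / |a - b|) hP
    (fun s => cross_iff_prog a b p hab hc s)
  refine ⟨h1, ?_⟩
  have h3 := h2.const_mul (if a > b then (1 : ℝ) else -1)
  have hval : (if a > b then (1 : ℝ) else -1) * (1 / (2 * Real.pi / |a - b|)) =
      (a - b) / (2 * Real.pi) := by
    rw [one_div_div]
    split_ifs with h
    · rw [abs_of_pos (sub_pos.mpr h)]; ring
    · rw [abs_of_neg (sub_neg.mpr (lt_of_le_of_ne (not_lt.mp h) hab))]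
      ring
  rw [hval] at h3
  refine h3.congr fun T => ?_
  rw [mul_div_assoc]
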